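/- The closed interval [53/81, 71/81] is contained in the set of sums of four squares of elements of the middle-thirds Cantor set, i.e. [53/81, 71/81] ⊆ {x_1^2 + x_2^2 + x_3^2 + x_4^2 : x_1, x_2, x_3, x_4 ∈ 𝒞}. -/

import Mathlib

set_option maxHeartbeats 1000000

/-- The middle-thirds Cantor set: all reals of the form `∑ tᵢ / 3^i` (`i ≥ 1`)
with each `tᵢ ∈ {0, 2}`. -/
def middleThirdsCantor : Set ℝ :=
  {x : ℝ | ∃ t : ℕ → ℝ, (∀ i, t i = 0 ∨ t i = 2) ∧ x = ∑' i : ℕ, t i / 3 ^ (i + 1)}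


namespace CantorFourAux

noncomputable section

def f1 (x : ℝ) : ℝ := 2*x^2 + 6*x
def f2 (x : ℝ) : ℝ := x^2 + 4*x

def Inv (R : ℝ) (k : ℕ) (p : ℝ × ℝ × ℝ) : Prop :=
  0 ≤ p.1 ∧ p.1 ≤ 1 - (1/3:ℝ)^k ∧ 0 ≤ p.2.1 ∧ p.2.1 ≤ 1 - (1/3:ℝ)^k ∧
  0 ≤ p.2.2 ∧ p.2.2 ≤ 1 - (1/3:ℝ)^k ∧
  0 ≤ R - (f1 p.1 + f2 p.2.1 + f2 p.2.2) ∧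
  R - (f1 p.1 + f2 p.2.1 + f2 p.2.2) ≤
    (1/3:ℝ)^k * (14 + 4*p.1 + 2*p.2.1 + 2*p.2.2 + 4*(1/3:ℝ)^k)

/-- One greedy step: given residual `R` in the feasible window at scale `3u`,
we can pick digits `t1 t2 t3 ∈ {0,2}` keeping the residual in the window at scale `u`. -/
lemma key_step (u p1 p2 p3 R : ℝ) (hu : 0 < u)
    (h1 : 0 ≤ p1) (h1' : p1 ≤ 1 - 3*u)
    (h2 : 0 ≤ p2) (h2' : p2 ≤ 1 - 3*u)
    (h3 : 0 ≤ p3) (h3' : p3 ≤ 1 - 3*u)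
    (hR0 : 0 ≤ R) (hRc : R ≤ 3*u*(14 + 4*p1 + 2*p2 + 2*p3 + 12*u)) :
    ∃ t1 t2 t3 : ℝ, (t1 = 0 ∨ t1 = 2) ∧ (t2 = 0 ∨ t2 = 2) ∧ (t3 = 0 ∨ t3 = 2) ∧
      0 ≤ R - t1*u*(6 + 4*p1 + 2*t1*u) - t2*u*(4 + 2*p2 + t2*u) - t3*u*(4 + 2*p3 + t3*u) ∧
      R - t1*u*(6 + 4*p1 + 2*t1*u) - t2*u*(4 + 2*p2 + t2*u) - t3*u*(4 + 2*p3 + t3*u) ≤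
        u*(14 + 4*(p1 + t1*u) + 2*(p2 + t2*u) + 2*(p3 + t3*u) + 4*u) := by
  have up1 : 0 ≤ u * p1 := mul_nonneg hu.le h1
  have up2 : 0 ≤ u * p2 := mul_nonneg hu.le h2
  have up3 : 0 ≤ u * p3 := mul_nonneg hu.le h3
  have up1' : u * p1 ≤ u * (1 - 3*u) := mul_le_mul_of_nonneg_left h1' hu.le
  have up2' : u * p2 ≤ u * (1 - 3*u) := mul_le_mul_of_nonneg_left h2' hu.le
  have up3' : u * p3 ≤ u * (1 - 3*u) := mul_le_mul_of_nonneg_left h3' hu.le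
  have uu : 0 < u * u := mul_pos hu hu
  set A := u*(12 + 8*p1 + 8*u) with hA
  rcases le_or_gt A R with cA | cA
  · set R1 := R - A with hR1
    set B := u*(8 + 4*p2 + 4*u) with hB
    rcases le_or_gt B R1 with cB | cB
    · set R2 := R1 - B with hR2
      set D := u*(8 + 4*p3 + 4*u) with hD
      rcases le_or_gt D R2 with cD | cD
      · exact ⟨2, 2, 2, Or.inr rfl, Or.inr rfl, Or.inr rfl, by nlinarith, by nlinarith⟩
      · exact ⟨2, 2, 0, Or.inr rfl, Or.inr rfl, Or.inl rfl, by nlinarith, by nlinarith⟩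
    · set D := u*(8 + 4*p3 + 4*u) with hD
      rcases le_or_gt D R1 with cD | cD
      · exact ⟨2, 0, 2, Or.inr rfl, Or.inl rfl, Or.inr rfl, by nlinarith, by nlinarith⟩
      · exact ⟨2, 0, 0, Or.inr rfl, Or.inl rfl, Or.inl rfl, by nlinarith, by nlinarith⟩
  · set B := u*(8 + 4*p2 + 4*u) with hB
    rcases le_or_gt B R with cB | cB
    · set R2 := R - B with hR2
      set D := u*(8 + 4*p3 + 4*u) with hD
      rcases le_or_gt D R2 with cD | cD
      · exact ⟨0, 2, 2, Or.inl rfl, Or.inr rfl, Or.inr rfl, by nlinarith, by nlinarith⟩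
      · exact ⟨0, 2, 0, Or.inl rfl, Or.inr rfl, Or.inl rfl, by nlinarith, by nlinarith⟩
    · set D := u*(8 + 4*p3 + 4*u) with hD
      rcases le_or_gt D R with cD | cD
      · exact ⟨0, 0, 2, Or.inl rfl, Or.inl rfl, Or.inr rfl, by nlinarith, by nlinarith⟩
      · exact ⟨0, 0, 0, Or.inl rfl, Or.inl rfl, Or.inl rfl, by nlinarith, by nlinarith⟩

lemma step_ex (R : ℝ) (k : ℕ) (p : ℝ × ℝ × ℝ) (h : Inv R k p) :
    ∃ q : ℝ × ℝ × ℝ, Inv R (k+1) q ∧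
      (q.1 = p.1 ∨ q.1 = p.1 + 2*(1/3:ℝ)^(k+1)) ∧
      (q.2.1 = p.2.1 ∨ q.2.1 = p.2.1 + 2*(1/3:ℝ)^(k+1)) ∧
      (q.2.2 = p.2.2 ∨ q.2.2 = p.2.2 + 2*(1/3:ℝ)^(k+1)) := by
  obtain ⟨b1, b1', b2, b2', b3, b3', r0, rc⟩ := h
  set u : ℝ := (1/3:ℝ)^(k+1) with hu_def
  have hu : 0 < u := by positivity
  have hk : (1/3:ℝ)^k = 3*u := by rw [hu_def, pow_succ]; ring
  obtain ⟨t1, t2, t3, ht1, ht2, ht3, hlo, hhi⟩ :=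
    key_step u p.1 p.2.1 p.2.2 (R - (f1 p.1 + f2 p.2.1 + f2 p.2.2)) hu
      b1 (by rw [hk] at b1'; linarith) b2 (by rw [hk] at b2'; linarith)
      b3 (by rw [hk] at b3'; linarith) r0 (by rw [hk] at rc; nlinarith [rc])
  have ht1n : 0 ≤ t1 := by rcases ht1 with h | h <;> simp [h] <;> norm_num
  have ht2n : 0 ≤ t2 := by rcases ht2 with h | h <;> simp [h] <;> norm_num
  have ht3n : 0 ≤ t3 := by rcases ht3 with h | h <;> simp [h] <;> norm_num
  have ht1u : t1 ≤ 2 := by rcases ht1 with h | h <;> simp [h] <;> norm_num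
  have ht2u : t2 ≤ 2 := by rcases ht2 with h | h <;> simp [h] <;> norm_num
  have ht3u : t3 ≤ 2 := by rcases ht3 with h | h <;> simp [h] <;> norm_num
  refine ⟨(p.1 + t1*u, p.2.1 + t2*u, p.2.2 + t3*u), ?_, ?_, ?_, ?_⟩
  · have e1 : f1 (p.1 + t1*u) = f1 p.1 + t1*u*(6 + 4*p.1 + 2*t1*u) := by unfold f1; ring
    have e2 : f2 (p.2.1 + t2*u) = f2 p.2.1 + t2*u*(4 + 2*p.2.1 + t2*u) := by unfold f2; ring
    have e3 : f2 (p.2.2 + t3*u) = f2 p.2.2 + t3*u*(4 + 2*p.2.2 + t3*u) := by unfold f2; ring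
    have hb1 : p.1 ≤ 1 - 3*u := by rw [hk] at b1'; linarith
    have hb2 : p.2.1 ≤ 1 - 3*u := by rw [hk] at b2'; linarith
    have hb3 : p.2.2 ≤ 1 - 3*u := by rw [hk] at b3'; linarith
    have htu1 : 0 ≤ t1*u := mul_nonneg ht1n hu.le
    have htu2 : 0 ≤ t2*u := mul_nonneg ht2n hu.le
    have htu3 : 0 ≤ t3*u := mul_nonneg ht3n hu.le
    have htu1' : t1*u ≤ 2*u := mul_le_mul_of_nonneg_right ht1u hu.le
    have htu2' : t2*u ≤ 2*u := mul_le_mul_of_nonneg_right ht2u hu.le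
    have htu3' : t3*u ≤ 2*u := mul_le_mul_of_nonneg_right ht3u hu.le
    refine ⟨by show (0:ℝ) ≤ p.1 + t1*u; linarith,
      by show p.1 + t1*u ≤ 1 - u; linarith,
      by show (0:ℝ) ≤ p.2.1 + t2*u; linarith,
      by show p.2.1 + t2*u ≤ 1 - u; linarith,
      by show (0:ℝ) ≤ p.2.2 + t3*u; linarith,
      by show p.2.2 + t3*u ≤ 1 - u; linarith, ?_, ?_⟩
    · simp only
      rw [e1, e2, e3]
      linarith [hlo]
    · simp only
      rw [e1, e2, e3]
      linarith [hhi]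
  · rcases ht1 with h | h <;> simp [h]
  · rcases ht2 with h | h <;> simp [h]
  · rcases ht3 with h | h <;> simp [h]

def chain (R : ℝ) (h : Inv R 0 (0,0,0)) : (k : ℕ) → {p : ℝ × ℝ × ℝ // Inv R k p}
  | 0 => ⟨(0,0,0), h⟩
  | (k+1) => ⟨(step_ex R k (chain R h k).1 (chain R h k).2).choose,
      (step_ex R k (chain R h k).1 (chain R h k).2).choose_spec.1⟩

lemma chain_step (R : ℝ) (h : Inv R 0 (0,0,0)) (k : ℕ) :
    ((chain R h (k+1)).1.1 = (chain R h k).1.1 ∨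
      (chain R h (k+1)).1.1 = (chain R h k).1.1 + 2*(1/3:ℝ)^(k+1)) ∧
    ((chain R h (k+1)).1.2.1 = (chain R h k).1.2.1 ∨
      (chain R h (k+1)).1.2.1 = (chain R h k).1.2.1 + 2*(1/3:ℝ)^(k+1)) ∧
    ((chain R h (k+1)).1.2.2 = (chain R h k).1.2.2 ∨
      (chain R h (k+1)).1.2.2 = (chain R h k).1.2.2 + 2*(1/3:ℝ)^(k+1)) :=
  (step_ex R k (chain R h k).1 (chain R h k).2).choose_spec.2



lemma summable_digits (t : ℕ → ℝ) (h0 : ∀ i, 0 ≤ t i) (h2 : ∀ i, t i ≤ 2) :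
    Summable (fun i : ℕ => t i / 3 ^ (i + 1)) := by
  have hg : Summable (fun i : ℕ => (2:ℝ) / 3 ^ (i + 1)) := by
    have h := (summable_geometric_of_lt_one (by norm_num : (0:ℝ) ≤ 1/3)
      (by norm_num)).mul_left (2/3 : ℝ)
    refine h.congr fun i => ?_
    rw [one_div, inv_pow, pow_succ]
    field_simp
  refine Summable.of_nonneg_of_le (fun i => div_nonneg (h0 i) (by positivity)) (fun i => ?_) hg
  gcongr
  exact h2 i

lemma tsum_two_thirds : ∑' i : ℕ, (2:ℝ) / 3 ^ (i + 1) = 1 := by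
  have h : ∀ i : ℕ, (2:ℝ) / 3 ^ (i + 1) = (2/3) * (1/3) ^ i := fun i => by
    rw [one_div, inv_pow, pow_succ]
    field_simp
  rw [tsum_congr h, tsum_mul_left, tsum_geometric_of_lt_one (by norm_num) (by norm_num)]
  norm_num

lemma mem_cantor_test (c0 c1 : ℝ) (hc0 : c0 = 0 ∨ c0 = 2) (hc1 : c1 = 0 ∨ c1 = 2)
    (t : ℕ → ℝ) (ht : ∀ i, t i = 0 ∨ t i = 2) :
    ∃ T : ℕ → ℝ, (∀ i, T i = 0 ∨ T i = 2) ∧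
      c0/3 + c1/9 + (∑' i : ℕ, t i / 3 ^ (i + 1))/9 = ∑' i : ℕ, T i / 3 ^ (i + 1) := by
  set T : ℕ → ℝ := fun n => Nat.casesOn n c0 (fun m => Nat.casesOn m c1 t) with hT
  have hTd : ∀ i, T i = 0 ∨ T i = 2 := by
    intro i
    match i with
    | 0 => exact hc0
    | 1 => exact hc1
    | (n+2) => exact ht n
  have hT0 : ∀ i, 0 ≤ T i := fun i => by rcases hTd i with h | h <;> simp [h]
  have hT2 : ∀ i, T i ≤ 2 := fun i => by rcases hTd i with h | h <;> simp [h]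
  have ht0 : ∀ i, 0 ≤ t i := fun i => by rcases ht i with h | h <;> simp [h]
  have ht2 : ∀ i, t i ≤ 2 := fun i => by rcases ht i with h | h <;> simp [h]
  have sT : Summable (fun n : ℕ => T n / 3 ^ (n + 1)) := summable_digits T hT0 hT2
  refine ⟨T, hTd, ?_⟩
  rw [Summable.tsum_eq_zero_add sT, Summable.tsum_eq_zero_add ((summable_nat_add_iff 1).mpr sT)]
  have key : ∀ n : ℕ, T (n+1+1) / 3 ^ (n+1+1+1) = (t n / 3 ^ (n+1)) * (1/9) := by
    intro n
    show t n / 3 ^ (n+3) = _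
    have e : (3:ℝ) ^ (n+3) = 3 ^ (n+1) * 9 := by
      rw [pow_succ, pow_succ]; ring
    rw [e]
    have : (3:ℝ) ^ (n+1) ≠ 0 := by positivity
    field_simp
  rw [tsum_congr key, tsum_mul_right]
  show _ = c0 / 3 ^ (0+1) + (c1 / 3 ^ (0+1+1) + _)
  ring


lemma exists_rep (R : ℝ) (hR0 : 0 ≤ R) (hR18 : R ≤ 18) :
    ∃ α γ δ : ℕ → ℝ, (∀ i, α i = 0 ∨ α i = 2) ∧ (∀ i, γ i = 0 ∨ γ i = 2) ∧
      (∀ i, δ i = 0 ∨ δ i = 2) ∧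
      R = f1 (∑' i : ℕ, α i / 3 ^ (i+1)) + f2 (∑' i : ℕ, γ i / 3 ^ (i+1))
          + f2 (∑' i : ℕ, δ i / 3 ^ (i+1)) := by
  have h0 : Inv R 0 (0,0,0) := by
    unfold Inv f1 f2
    norm_num
    constructor
    · exact hR0
    · linarith
  set ch : (k : ℕ) → {p : ℝ × ℝ × ℝ // Inv R k p} := chain R h0 with hch
  set pa : ℕ → ℝ := fun k => (ch k).1.1 with hpa
  set pc : ℕ → ℝ := fun k => (ch k).1.2.1 with hpc
  set pd : ℕ → ℝ := fun k => (ch k).1.2.2 with hpd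
  have pa0 : pa 0 = 0 := rfl
  have pc0 : pc 0 = 0 := rfl
  have pd0 : pd 0 = 0 := rfl
  set α : ℕ → ℝ := fun i => 3 ^ (i+1) * (pa (i+1) - pa i) with hαdef
  set γ : ℕ → ℝ := fun i => 3 ^ (i+1) * (pc (i+1) - pc i) with hγdef
  set δ : ℕ → ℝ := fun i => 3 ^ (i+1) * (pd (i+1) - pd i) with hδdef
  have digit_of : ∀ (q : ℕ → ℝ) (i : ℕ),
      (q (i+1) = q i ∨ q (i+1) = q i + 2*(1/3:ℝ)^(i+1)) →
      (3 ^ (i+1) * (q (i+1) - q i) = 0 ∨ 3 ^ (i+1) * (q (i+1) - q i) = 2) := by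
    intro q i h
    rcases h with h | h
    · left; rw [h]; ring
    · right
      rw [h]
      have : ((1:ℝ)/3) ^ (i+1) * 3 ^ (i+1) = 1 := by
        rw [← mul_pow]; norm_num
      calc (3:ℝ) ^ (i+1) * (q i + 2*(1/3)^(i+1) - q i)
          = 2 * ((1/3:ℝ)^(i+1) * 3 ^ (i+1)) := by ring
        _ = 2 := by rw [this]; ring
  have hα : ∀ i, α i = 0 ∨ α i = 2 := fun i => digit_of pa i (chain_step R h0 i).1
  have hγ : ∀ i, γ i = 0 ∨ γ i = 2 := fun i => digit_of pc i (chain_step R h0 i).2.1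
  have hδ : ∀ i, δ i = 0 ∨ δ i = 2 := fun i => digit_of pd i (chain_step R h0 i).2.2
  have term_of : ∀ (q : ℕ → ℝ) (i : ℕ),
      (3 ^ (i+1) * (q (i+1) - q i) : ℝ) / 3 ^ (i+1) = q (i+1) - q i := by
    intro q i
    exact mul_div_cancel_left₀ _ (by positivity)
  have psum : ∀ (q : ℕ → ℝ), q 0 = 0 → ∀ n,
      ∑ i ∈ Finset.range n, (3 ^ (i+1) * (q (i+1) - q i) : ℝ) / 3 ^ (i+1) = q n := by
    intro q hq0 n
    rw [Finset.sum_congr rfl (fun i _ => term_of q i), Finset.sum_range_sub q, hq0, sub_zero]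
  have lim_of : ∀ (q : ℕ → ℝ), q 0 = 0 →
      (∀ i, (3 ^ (i+1) * (q (i+1) - q i) : ℝ) = 0 ∨ (3 ^ (i+1) * (q (i+1) - q i) : ℝ) = 2) →
      Filter.Tendsto q Filter.atTop
        (nhds (∑' i : ℕ, (3 ^ (i+1) * (q (i+1) - q i) : ℝ) / 3 ^ (i+1))) := by
    intro q hq0 hdig
    have h0' : ∀ i, 0 ≤ (3 ^ (i+1) * (q (i+1) - q i) : ℝ) := fun i => by
      rcases hdig i with h | h <;> rw [h] <;> norm_num
    have h2' : ∀ i, (3 ^ (i+1) * (q (i+1) - q i) : ℝ) ≤ 2 := fun i => by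
      rcases hdig i with h | h <;> rw [h] <;> norm_num
    have s := summable_digits _ h0' h2'
    have := s.hasSum.tendsto_sum_nat
    have e : (fun n => ∑ i ∈ Finset.range n,
        (3 ^ (i+1) * (q (i+1) - q i) : ℝ) / 3 ^ (i+1)) = q := funext (psum q hq0)
    rwa [e] at this
  have ha : Filter.Tendsto pa Filter.atTop (nhds (∑' i : ℕ, α i / 3 ^ (i+1))) :=
    lim_of pa pa0 (fun i => hα i)
  have hc : Filter.Tendsto pc Filter.atTop (nhds (∑' i : ℕ, γ i / 3 ^ (i+1))) :=
    lim_of pc pc0 (fun i => hγ i)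
  have hd : Filter.Tendsto pd Filter.atTop (nhds (∑' i : ℕ, δ i / 3 ^ (i+1))) :=
    lim_of pd pd0 (fun i => hδ i)
  set a : ℝ := ∑' i : ℕ, α i / 3 ^ (i+1)
  set c : ℝ := ∑' i : ℕ, γ i / 3 ^ (i+1)
  set d : ℝ := ∑' i : ℕ, δ i / 3 ^ (i+1)
  -- squeeze
  have inv : ∀ k, Inv R k (ch k).1 := fun k => (ch k).2
  have lower : ∀ k, 0 ≤ R - (f1 (pa k) + f2 (pc k) + f2 (pd k)) := fun k => (inv k).2.2.2.2.2.2.1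
  have upper : ∀ k, R - (f1 (pa k) + f2 (pc k) + f2 (pd k)) ≤ 26 * (1/3:ℝ)^k := by
    intro k
    obtain ⟨b1, b1', b2, b2', b3, b3', r0, rc⟩ := inv k
    have hp : (0:ℝ) < (1/3:ℝ)^k := by positivity
    have hp1 : (1/3:ℝ)^k ≤ 1 := pow_le_one₀ (by norm_num) (by norm_num)
    nlinarith [rc]
  have hb : Filter.Tendsto (fun k : ℕ => 26 * (1/3:ℝ)^k) Filter.atTop (nhds 0) := by
    have h := tendsto_pow_atTop_nhds_zero_of_lt_one (by norm_num : (0:ℝ) ≤ 1/3) (by norm_num)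
    simpa using h.const_mul 26
  have t1 : Filter.Tendsto (fun k => R - (f1 (pa k) + f2 (pc k) + f2 (pd k)))
      Filter.atTop (nhds 0) := squeeze_zero lower upper hb
  have cf1 : Continuous f1 := by unfold f1; continuity
  have cf2 : Continuous f2 := by unfold f2; continuity
  have t2 : Filter.Tendsto (fun k => R - (f1 (pa k) + f2 (pc k) + f2 (pd k)))
      Filter.atTop (nhds (R - (f1 a + f2 c + f2 d))) := by
    exact tendsto_const_nhds.sub ((((cf1.tendsto a).comp ha).add
      ((cf2.tendsto c).comp hc)).add ((cf2.tendsto d).comp hd))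
  have hz : (0:ℝ) = R - (f1 a + f2 c + f2 d) := tendsto_nhds_unique t1 t2
  exact ⟨α, γ, δ, hα, hγ, hδ, by linarith⟩


lemma mem_head2 (c0 c1 : ℝ) (hc0 : c0 = 0 ∨ c0 = 2) (hc1 : c1 = 0 ∨ c1 = 2)
    (t : ℕ → ℝ) (ht : ∀ i, t i = 0 ∨ t i = 2) :
    c0/3 + c1/9 + (∑' i : ℕ, t i / 3 ^ (i + 1))/9 ∈ middleThirdsCantor := by
  obtain ⟨T, hT, he⟩ := mem_cantor_test c0 c1 hc0 hc1 t ht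
  exact ⟨T, hT, he⟩

end

end CantorFourAux

open CantorFourAux in
theorem Icc_subset_four_squares_of_cantor :
    Set.Icc (53 / 81 : ℝ) (71 / 81 : ℝ) ⊆
      {x : ℝ | ∃ x₁ ∈ middleThirdsCantor, ∃ x₂ ∈ middleThirdsCantor,
        ∃ x₃ ∈ middleThirdsCantor, ∃ x₄ ∈ middleThirdsCantor,
          x = x₁ ^ 2 + x₂ ^ 2 + x₃ ^ 2 + x₄ ^ 2} := by
  intro s hs
  obtain ⟨hs1, hs2⟩ := hs
  obtain ⟨α, γ, δ, hα, hγ, hδ, hrep⟩ := exists_rep (81*s - 53)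
    (by linarith) (by linarith)
  set a : ℝ := ∑' i : ℕ, α i / 3 ^ (i + 1) with hadef
  set c : ℝ := ∑' i : ℕ, γ i / 3 ^ (i + 1) with hcdef
  set d : ℝ := ∑' i : ℕ, δ i / 3 ^ (i + 1) with hddef
  set β : ℕ → ℝ := fun i => 2 - α i with hβdef
  have hβ : ∀ i, β i = 0 ∨ β i = 2 := by
    intro i
    rcases hα i with h | h
    · right; simp [hβdef, h]
    · left; simp [hβdef, h]
  have hβsum : ∑' i : ℕ, β i / 3 ^ (i + 1) = 1 - a := by
    have e : ∀ i : ℕ, β i / 3 ^ (i + 1) = 2 / 3 ^ (i + 1) - α i / 3 ^ (i + 1) := by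
      intro i
      rw [hβdef]
      rw [sub_div]
    have s2 : Summable (fun i : ℕ => (2:ℝ) / 3 ^ (i + 1)) :=
      summable_digits (fun _ => 2) (fun _ => by norm_num) (fun _ => le_refl 2)
    have sα : Summable (fun i : ℕ => α i / 3 ^ (i + 1)) :=
      summable_digits α (fun i => by rcases hα i with h | h <;> simp [h])
        (fun i => by rcases hα i with h | h <;> simp [h])
    rw [tsum_congr e, Summable.tsum_sub s2 sα, tsum_two_thirds, hadef]
  have m1 : (2:ℝ)/3 + 0/9 + a/9 ∈ middleThirdsCantor :=
    mem_head2 2 0 (Or.inr rfl) (Or.inl rfl) α hα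
  have m2 : (0:ℝ)/3 + 2/9 + (∑' i : ℕ, β i / 3 ^ (i + 1))/9 ∈ middleThirdsCantor :=
    mem_head2 0 2 (Or.inl rfl) (Or.inr rfl) β hβ
  have m3 : (0:ℝ)/3 + 2/9 + c/9 ∈ middleThirdsCantor :=
    mem_head2 0 2 (Or.inl rfl) (Or.inr rfl) γ hγ
  have m4 : (0:ℝ)/3 + 2/9 + d/9 ∈ middleThirdsCantor :=
    mem_head2 0 2 (Or.inl rfl) (Or.inr rfl) δ hδ
  rw [hβsum] at m2
  refine ⟨_, m1, _, m2, _, m3, _, m4, ?_⟩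
  unfold f1 f2 at hrep
  linear_combination hrep / 81
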